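/- Let γ ∈ {1, −1}. For each integer n define on the open set Ω = {(t,x) ∈ ℝ² : e^x ≠ γ} the vector field L_n = e^{-nt} ∂_t + γ e^{-nt} [ e^{nx} − (e^{x} − γ)^{n} ] (e^{x} − γ)^{1−n} ∂_x, where the exponents n and 1−n are integer powers. Then for all integers m, n one has [L_m, L_n] = (m − n) L_{m+n} at every point of Ω. (Realization 𝔚₆ of the Witt algebra from Theorem 1.) -/

import Mathlib

noncomputable section

/-- Partial derivative of `f : ℝ² → ℝ` (curried) in the first variable `t`. -/
def qt (f : ℝ → ℝ → ℝ) (t x : ℝ) : ℝ := deriv (fun s => f s x) t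

/-- Partial derivative in the second variable `x`. -/
def qx (f : ℝ → ℝ → ℝ) (t x : ℝ) : ℝ := deriv (fun s => f t s) x

/-- A vector field `τ ∂_t + ξ ∂_x` on ℝ² with coordinates `(t,x)`. -/
structure VF2 where
  tau : ℝ → ℝ → ℝ
  xi  : ℝ → ℝ → ℝ

/-- Action of a vector field on a function: `X(F) = τ F_t + ξ F_x`. -/
def VF2.app (X : VF2) (F : ℝ → ℝ → ℝ) (t x : ℝ) : ℝ :=
  X.tau t x * qt F t x + X.xi t x * qx F t x

/-- Lie bracket of vector fields on ℝ². -/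
def VF2.bracket (X Y : VF2) : VF2 where
  tau := fun t x => X.app Y.tau t x - Y.app X.tau t x
  xi  := fun t x => X.app Y.xi t x - Y.app X.xi t x

/-- Scalar multiple of a vector field. -/
def VF2.smul (c : ℝ) (X : VF2) : VF2 where
  tau := fun t x => c * X.tau t x
  xi  := fun t x => c * X.xi t x

/-- The vector fields of the realization 𝔚₆ (defined on `Ω = {e^x ≠ γ}`):
`L n = e^{-nt} ∂_t + γ e^{-nt}[e^{nx} - (e^x - γ)^n](e^x - γ)^{1-n} ∂_x`. -/
def W6 (γ : ℝ) (n : ℤ) : VF2 where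
  tau := fun t _ => Real.exp (-(n : ℝ) * t)
  xi  := fun t x => γ * Real.exp (-(n : ℝ) * t) *
    (Real.exp ((n : ℝ) * x) - (Real.exp x - γ) ^ (n : ℤ)) *
    (Real.exp x - γ) ^ (1 - n : ℤ)

/-- Realization 𝔚₆ of the Witt algebra: on `Ω = {(t,x) : e^x ≠ γ}` one has
`[L m, L n] = (m - n) L (m + n)`. -/
theorem witt_realization_W6 (γ : ℝ) (hγ : γ = 1 ∨ γ = -1) (m n : ℤ)
    (t x : ℝ) (hx : Real.exp x ≠ γ) :
    (VF2.bracket (W6 γ m) (W6 γ n)).tau t x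
      = ((m : ℝ) - (n : ℝ)) * (W6 γ (m + n)).tau t x ∧
    (VF2.bracket (W6 γ m) (W6 γ n)).xi t x
      = ((m : ℝ) - (n : ℝ)) * (W6 γ (m + n)).xi t x := by
  have hu : Real.exp x - γ ≠ 0 := sub_ne_zero.mpr hx
  have hexp : ∀ (c t : ℝ), HasDerivAt (fun s => Real.exp (c*s)) (c * Real.exp (c*t)) t := by
    intro c t
    simpa [mul_comm] using ((hasDerivAt_id t).const_mul c).exp
  have qt_tau : ∀ k : ℤ, qt (W6 γ k).tau t x = -(k:ℝ) * Real.exp (-(k:ℝ)*t) := by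
    intro k
    simp only [qt, W6]
    exact (hexp (-(k:ℝ)) t).deriv
  have qx_tau : ∀ k : ℤ, qx (W6 γ k).tau t x = 0 := by
    intro k; simp [qx, W6]
  have qt_xi : ∀ k : ℤ, qt (W6 γ k).xi t x
      = γ * (-(k:ℝ) * Real.exp (-(k:ℝ)*t)) *
        (Real.exp ((k:ℝ) * x) - (Real.exp x - γ) ^ (k : ℤ)) *
        (Real.exp x - γ) ^ (1 - k : ℤ) := by
    intro k
    simp only [qt, W6]
    exact ((((hexp (-(k:ℝ)) t).const_mul γ).mul_const
      (Real.exp ((k:ℝ) * x) - (Real.exp x - γ) ^ (k : ℤ))).mul_const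
      ((Real.exp x - γ) ^ (1 - k : ℤ))).deriv
  have hzpow : ∀ k : ℤ, HasDerivAt (fun s => (Real.exp s - γ)^(k:ℤ))
      ((k:ℝ) * (Real.exp x - γ)^(k-1:ℤ) * Real.exp x) x := by
    intro k
    simpa [Function.comp_def] using (hasDerivAt_zpow k (Real.exp x - γ) (Or.inl hu)).comp x
      ((Real.hasDerivAt_exp x).sub_const γ)
  have qx_xi : ∀ k : ℤ, qx (W6 γ k).xi t x
      = γ * Real.exp (-(k:ℝ)*t) *
        ( ((k:ℝ) * Real.exp ((k:ℝ)*x) - (k:ℝ) * (Real.exp x - γ)^(k-1:ℤ) * Real.exp x)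
            * (Real.exp x - γ)^(1-k:ℤ)
          + (Real.exp ((k:ℝ)*x) - (Real.exp x - γ)^(k:ℤ))
            * (((1-k:ℤ):ℝ) * (Real.exp x - γ)^(1-k-1:ℤ) * Real.exp x) ) := by
    intro k
    simp only [qx, W6]
    have hfun : (fun s => γ * Real.exp (-(k:ℝ)*t) *
        (Real.exp ((k:ℝ) * s) - (Real.exp s - γ) ^ (k : ℤ)) *
        (Real.exp s - γ) ^ (1 - k : ℤ))
      = fun s => (γ * Real.exp (-(k:ℝ)*t)) *
        ((Real.exp ((k:ℝ) * s) - (Real.exp s - γ) ^ (k : ℤ)) *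
         (Real.exp s - γ) ^ (1 - k : ℤ)) := by
      funext s; ring
    rw [hfun]
    exact ((((hexp (k:ℝ) x).sub (hzpow k)).mul (hzpow (1-k))).const_mul
      (γ * Real.exp (-(k:ℝ)*t))).deriv
  have hsplit : ∀ k l : ℤ, Real.exp (-((k+l : ℤ):ℝ)*t) = Real.exp (-(k:ℝ)*t) * Real.exp (-(l:ℝ)*t) := by
    intro k l
    rw [← Real.exp_add]
    push_cast
    ring_nf
  constructor
  · simp only [VF2.bracket, VF2.app, qt_tau, qx_tau]
    simp only [W6, hsplit m n]
    ring
  · simp only [VF2.bracket, VF2.app, qt_xi, qx_xi]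
    simp only [W6, hsplit m n]
    have e1 : ∀ k : ℤ, (Real.exp x - γ)^(1-k:ℤ)
        = (Real.exp x - γ) * ((Real.exp x - γ)^(k:ℤ))⁻¹ := by
      intro k
      rw [zpow_sub₀ hu, zpow_one, div_eq_mul_inv]
    have e4 : ∀ k : ℤ, (Real.exp x - γ)^(k-1:ℤ)
        = (Real.exp x - γ)^(k:ℤ) * (Real.exp x - γ)⁻¹ := by
      intro k
      rw [zpow_sub₀ hu, zpow_one, div_eq_mul_inv]
    have e2 : (Real.exp x - γ)^(m+n:ℤ)
        = (Real.exp x - γ)^(m:ℤ) * (Real.exp x - γ)^(n:ℤ) := zpow_add₀ hu m n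
    have e5 : Real.exp (((m+n : ℤ):ℝ)*x) = Real.exp ((m:ℝ)*x) * Real.exp ((n:ℝ)*x) := by
      rw [← Real.exp_add]; push_cast; ring_nf
    have e6 : ∀ k : ℤ, (1-k-1 : ℤ) = (-k : ℤ) := by intro k; ring
    have e7 : ∀ k : ℤ, (Real.exp x - γ)^(-k:ℤ) = ((Real.exp x - γ)^(k:ℤ))⁻¹ := by
      intro k; rw [zpow_neg]
    simp only [e6, e7, e1, e4, e2, e5]
    have ham : (Real.exp x - γ)^(m:ℤ) ≠ 0 := zpow_ne_zero _ hu
    have han : (Real.exp x - γ)^(n:ℤ) ≠ 0 := zpow_ne_zero _ hu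
    push_cast
    rcases hγ with rfl | rfl <;> field_simp <;> ring
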